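/- For all α, β ∈ Ĩ, ϱ(α, β) = 1 if and only if either (α = ⟨0,1⟩ and β = ⟨1,0⟩) or (α = ⟨1,0⟩ and β = ⟨0,1⟩). -/
import Mathlib

/-- The set of intuitionistic fuzzy values (IFVs). -/
def Itilde : Set (ℝ × ℝ) :=
  {p | 0 ≤ p.1 ∧ p.1 ≤ 1 ∧ 0 ≤ p.2 ∧ p.2 ≤ 1 ∧ p.1 + p.2 ≤ 1}

/-- Score degree `s(α) = μ_α - ν_α`. -/
def score (p : ℝ × ℝ) : ℝ := p.1 - p.2

/-- Accuracy degree `h(α) = μ_α + ν_α`. -/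
def accuracy (p : ℝ × ℝ) : ℝ := p.1 + p.2

/-- The distance measure `ϱ` of Wu et al. -/
noncomputable def vrho (a b : ℝ × ℝ) : ℝ :=
  if score a ≠ score b then (1 + |score a - score b|) / 3
  else |accuracy a - accuracy b| / 3

/-- `ϱ(α, β) = 1` iff `(α = ⟨0,1⟩ ∧ β = ⟨1,0⟩)` or `(α = ⟨1,0⟩ ∧ β = ⟨0,1⟩)`. -/
theorem vrho_eq_one_iff (a b : ℝ × ℝ) (ha : a ∈ Itilde) (hb : b ∈ Itilde) :
    vrho a b = 1 ↔
      (a = ((0 : ℝ), (1 : ℝ)) ∧ b = ((1 : ℝ), (0 : ℝ))) ∨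
      (a = ((1 : ℝ), (0 : ℝ)) ∧ b = ((0 : ℝ), (1 : ℝ))) := by
  obtain ⟨ha1, ha2, ha3, ha4, ha5⟩ := ha
  obtain ⟨hb1, hb2, hb3, hb4, hb5⟩ := hb
  constructor
  · intro h
    unfold vrho score accuracy at h
    split_ifs at h with hs
    · have h2 : |a.1 - a.2 - (b.1 - b.2)| = 2 := by linarith
      rcases abs_cases (a.1 - a.2 - (b.1 - b.2)) with ⟨he, _⟩ | ⟨he, _⟩
      · right
        simp only [Prod.ext_iff]
        refine ⟨⟨?_, ?_⟩, ?_, ?_⟩ <;> linarith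
      · left
        simp only [Prod.ext_iff]
        refine ⟨⟨?_, ?_⟩, ?_, ?_⟩ <;> linarith
    · exfalso
      rcases abs_cases (a.1 + a.2 - (b.1 + b.2)) with ⟨he, _⟩ | ⟨he, _⟩ <;> linarith
  · rintro (⟨rfl, rfl⟩ | ⟨rfl, rfl⟩) <;> norm_num [vrho, score, accuracy]
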